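/- Assume λ₁ ≠ μ₁c₁. Then the quartic polynomial Δ₁ has exactly four real roots y₁ < y₂ < y₃ < y₄, all of which are positive and pairwise distinct, and they satisfy 0 < y₁ < y₂ < 1 < y₃ < y₄. -/

import Mathlib

lemma quadfac (b p c : ℝ) (hb : 0 < b) (hc : 0 < c) (h1 : b - p + c < 0) :
    ∃ r s : ℝ, 0 < r ∧ r < 1 ∧ 1 < s ∧
      ∀ y : ℝ, b*y^2 - p*y + c = b*(y-r)*(y-s) := by
  have hp : b + c < p := by linarith
  have hp0 : 0 < p := by linarith
  have hD : 0 < p^2 - 4*b*c := by nlinarith [sq_nonneg (b - c)]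
  set d := Real.sqrt (p^2 - 4*b*c) with hddef
  have hd0 : 0 ≤ d := Real.sqrt_nonneg _
  have hd2 : d^2 = p^2 - 4*b*c := Real.sq_sqrt hD.le
  have hdp : d < p := by
    rw [hddef]
    exact (Real.sqrt_lt' hp0).2 (by nlinarith)
  have hb' : (b:ℝ) ≠ 0 := hb.ne'
  set r := (p-d)/(2*b) with hr
  set s := (p+d)/(2*b) with hs
  have hfac : ∀ y : ℝ, b*y^2 - p*y + c = b*(y-r)*(y-s) := by
    intro y
    rw [hr, hs]
    field_simp
    linear_combination hd2
  have hr0 : 0 < r := div_pos (by linarith) (by linarith)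
  have hrs : r ≤ s := by
    rw [hr, hs]
    gcongr
    linarith
  have h1' : b*(1-r)*(1-s) < 0 := by rw [← hfac 1]; linarith
  have hr1 : r < 1 := by
    by_contra h
    push_neg at h
    nlinarith [mul_nonneg (by linarith : (0:ℝ) ≤ r - 1) (by linarith : (0:ℝ) ≤ s - 1)]
  have hs1 : 1 < s := by
    by_contra h
    push_neg at h
    nlinarith [mul_nonneg (by linarith : (0:ℝ) ≤ 1 - r) (by linarith : (0:ℝ) ≤ 1 - s)]
  exact ⟨r, s, hr0, hr1, hs1, hfac⟩

/-- Δ₁(y) = (μ₂c₂y² − (λ₁+λ₂+μ₁c₁+μ₂c₂)y + λ₂)² − 4μ₁c₁λ₁y² -/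
noncomputable def Delta1 (la1 la2 mu1 mu2 c1 c2 : ℝ) (y : ℝ) : ℝ :=
  (mu2 * c2 * y ^ 2 - (la1 + la2 + mu1 * c1 + mu2 * c2) * y + la2) ^ 2
    - 4 * mu1 * c1 * la1 * y ^ 2

theorem stmt10 (la1 la2 mu1 mu2 c1 c2 : ℝ)
    (hla1 : 0 < la1) (hla2 : 0 < la2) (hmu1 : 0 < mu1) (hmu2 : 0 < mu2)
    (hc1 : 0 < c1) (hc2 : 0 < c2) (hne : la1 ≠ mu1 * c1) :
    ∃ y1 y2 y3 y4 : ℝ,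
      0 < y1 ∧ y1 < y2 ∧ y2 < 1 ∧ 1 < y3 ∧ y3 < y4 ∧
      ∀ y : ℝ, Delta1 la1 la2 mu1 mu2 c1 c2 y = 0 ↔ (y = y1 ∨ y = y2 ∨ y = y3 ∨ y = y4) := by
  set b := mu2 * c2 with hbdef
  have hb : 0 < b := by positivity
  set S := la1 + la2 + mu1 * c1 + mu2 * c2 with hSdef
  set a := Real.sqrt (mu1 * c1 * la1) with hadef
  have ha2 : a ^ 2 = mu1 * c1 * la1 := Real.sq_sqrt (by positivity)
  have ha0 : 0 < a := Real.sqrt_pos.2 (by positivity)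
  -- 2a < la1 + mu1*c1 strictly (AM-GM with ≠)
  have hsq : 0 < (la1 - mu1 * c1) ^ 2 := by
    have := sub_ne_zero.2 hne
    positivity
  have hAM : 2 * a < la1 + mu1 * c1 := by
    by_contra h
    push_neg at h
    have h2 : (la1 + mu1 * c1) ^ 2 ≤ (2 * a) ^ 2 := by
      nlinarith [mul_nonneg (sub_nonneg.2 h) (by positivity : (0:ℝ) ≤ 2 * a + (la1 + mu1 * c1))]
    nlinarith [ha2, hsq]
  -- the two quadratics
  obtain ⟨r1, s1, hr10, hr11, hs11, hfm⟩ :=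
    quadfac b (S + 2*a) la2 hb hla2 (by rw [hbdef, hSdef]; linarith)
  obtain ⟨r2, s2, hr20, hr21, hs21, hfp⟩ :=
    quadfac b (S - 2*a) la2 hb hla2 (by rw [hbdef, hSdef]; linarith)
  -- ordering: r1 < r2 and s2 < s1
  have key1 : b * (r2 - r1) * (r2 - s1) < 0 := by
    have e1 := hfm r2
    have e2 := hfp r2
    nlinarith [ha0, hr20]
  have key2 : b * (s2 - r1) * (s2 - s1) < 0 := by
    have e1 := hfm s2
    have e2 := hfp s2
    nlinarith [ha0, hr20]
  have hr12 : r1 < r2 := by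
    by_contra h
    push_neg at h
    nlinarith [mul_nonneg (by linarith : (0:ℝ) ≤ r1 - r2) (by linarith : (0:ℝ) ≤ s1 - r2)]
  have hs21' : s2 < s1 := by
    by_contra h
    push_neg at h
    nlinarith [mul_nonneg (by linarith : (0:ℝ) ≤ s2 - r1) (by linarith : (0:ℝ) ≤ s2 - s1)]
  refine ⟨r1, r2, s2, s1, hr10, hr12, hr21, hs21, hs21', ?_⟩
  intro y
  have hD : Delta1 la1 la2 mu1 mu2 c1 c2 y
      = (b * (y - r1) * (y - s1)) * (b * (y - r2) * (y - s2)) := by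
    rw [← hfm y, ← hfp y]
    unfold Delta1
    rw [hbdef, hSdef]
    linear_combination (4 * y ^ 2) * ha2
  rw [hD]
  constructor
  · intro h
    rcases mul_eq_zero.1 h with h | h <;>
      rcases mul_eq_zero.1 h with h | h <;>
      first
        | (rcases mul_eq_zero.1 h with h | h
           · exact absurd h hb.ne'
           · simp [sub_eq_zero.1 h])
        | simp [sub_eq_zero.1 h]
  · rintro (rfl | rfl | rfl | rfl) <;> ring
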